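/- The representation RMMaxF := MMCR ∪ MFCRMax exactly characterizes membership in MCR: for every pattern X ⊆ ℐ, X ∈ MCR if and only if there exist J ∈ RMMaxF and Z ∈ RMMaxF with J ⊆ X ⊆ Z. -/
import Mathlib


open Finset

variable {τ ι : Type*} [DecidableEq ι]

/-- Conjunctive support: number of transactions containing the whole pattern. -/
def suppConj (T : Finset τ) (items : τ → Finset ι) (X : Finset ι) : ℕ :=
  (T.filter fun t => X ⊆ items t).card

/-- Disjunctive support: number of transactions containing at least one item of the pattern. -/
def suppDisj (T : Finset τ) (items : τ → Finset ι) (X : Finset ι) : ℕ :=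
  (T.filter fun t => (X ∩ items t).Nonempty).card

/-- The bond measure (division by zero in `ℚ` yields `0`, matching the convention). -/
def bond (T : Finset τ) (items : τ → Finset ι) (X : Finset ι) : ℚ :=
  (suppConj T items X : ℚ) / (suppDisj T items X : ℚ)

/-- Correlated patterns. -/
def MC (T : Finset τ) (items : τ → Finset ι) (I : Finset ι) (minbond : ℚ) :
    Set (Finset ι) :=
  {X | X ⊆ I ∧ minbond ≤ bond T items X}

/-- Correlated rare patterns. -/
def MCR (T : Finset τ) (items : τ → Finset ι) (I : Finset ι) (minsupp : ℕ) (minbond : ℚ) :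
    Set (Finset ι) :=
  {X | X ⊆ I ∧ minbond ≤ bond T items X ∧ suppConj T items X < minsupp}

/-- Closed correlated rare patterns. -/
def MFCR (T : Finset τ) (items : τ → Finset ι) (I : Finset ι) (minsupp : ℕ) (minbond : ℚ) :
    Set (Finset ι) :=
  {X | X ∈ MCR T items I minsupp minbond ∧
    ∀ Y : Finset ι, X ⊂ Y → Y ⊆ I → bond T items Y ≠ bond T items X}

/-- Minimal correlated rare patterns. -/
def MMCR (T : Finset τ) (items : τ → Finset ι) (I : Finset ι) (minsupp : ℕ) (minbond : ℚ) :
    Set (Finset ι) :=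
  {X | X ∈ MCR T items I minsupp minbond ∧
    ∀ Y : Finset ι, Y ⊂ X → bond T items Y ≠ bond T items X}

/-- Maximal correlated patterns: correlated with no strict correlated superset. -/
def MCMax (T : Finset τ) (items : τ → Finset ι) (I : Finset ι) (minbond : ℚ) :
    Set (Finset ι) :=
  {X | X ∈ MC T items I minbond ∧
    ∀ Y : Finset ι, X ⊂ Y → Y ⊆ I → Y ∉ MC T items I minbond}

/-- Maximal closed correlated rare patterns. -/
def MFCRMax (T : Finset τ) (items : τ → Finset ι) (I : Finset ι) (minsupp : ℕ) (minbond : ℚ) :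
    Set (Finset ι) :=
  MFCR T items I minsupp minbond ∩ MCMax T items I minbond

/-- The representation `RMMaxF = MMCR ∪ MFCRMax`. -/
def RMMaxF (T : Finset τ) (items : τ → Finset ι) (I : Finset ι) (minsupp : ℕ) (minbond : ℚ) :
    Set (Finset ι) :=
  MMCR T items I minsupp minbond ∪ MFCRMax T items I minsupp minbond

lemma suppConj_anti (T : Finset τ) (items : τ → Finset ι) {X Y : Finset ι} (h : X ⊆ Y) :
    suppConj T items Y ≤ suppConj T items X := by
  apply Finset.card_le_card
  intro t ht
  simp only [Finset.mem_filter] at *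
  exact ⟨ht.1, h.trans ht.2⟩

lemma suppDisj_mono (T : Finset τ) (items : τ → Finset ι) {X Y : Finset ι} (h : X ⊆ Y) :
    suppDisj T items X ≤ suppDisj T items Y := by
  apply Finset.card_le_card
  intro t ht
  simp only [Finset.mem_filter] at *
  exact ⟨ht.1, ht.2.mono (Finset.inter_subset_inter h (Finset.Subset.refl _))⟩

lemma supp_pos_of_bond_pos (T : Finset τ) (items : τ → Finset ι) {X : Finset ι}
    (h : 0 < bond T items X) :
    0 < suppConj T items X ∧ 0 < suppDisj T items X := by
  rcases Nat.eq_zero_or_pos (suppDisj T items X) with hd | hd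
  · simp [bond, hd] at h
  rcases Nat.eq_zero_or_pos (suppConj T items X) with hc | hc
  · simp [bond, hc] at h
  exact ⟨hc, hd⟩

lemma bond_anti (T : Finset τ) (items : τ → Finset ι) {X Y : Finset ι} (h : X ⊆ Y)
    (hd : 0 < suppDisj T items X) : bond T items Y ≤ bond T items X := by
  apply div_le_div₀ (Nat.cast_nonneg _) (Nat.cast_le.2 (suppConj_anti T items h))
    (by exact_mod_cast hd) (Nat.cast_le.2 (suppDisj_mono T items h))

/-- If `Y ⊆ X` have the same positive bond, they have the same conjunctive support. -/
lemma suppConj_eq_of_bond_eq (T : Finset τ) (items : τ → Finset ι) {X Y : Finset ι}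
    (h : Y ⊆ X) (hb : bond T items Y = bond T items X) (hpos : 0 < bond T items X) :
    suppConj T items Y = suppConj T items X := by
  obtain ⟨hcX, hdX⟩ := supp_pos_of_bond_pos T items hpos
  obtain ⟨hcY, hdY⟩ := supp_pos_of_bond_pos T items (hb ▸ hpos)
  have hcross : (suppConj T items Y : ℚ) * (suppDisj T items X : ℚ)
      = (suppConj T items X : ℚ) * (suppDisj T items Y : ℚ) := by
    have := (div_eq_div_iff (Nat.cast_ne_zero.2 hdY.ne') (Nat.cast_ne_zero.2 hdX.ne')).1 hb
    exact this
  have hcross' : suppConj T items Y * suppDisj T items X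
      = suppConj T items X * suppDisj T items Y := by exact_mod_cast hcross
  have h1 : suppConj T items X ≤ suppConj T items Y := suppConj_anti T items h
  have h2 : suppDisj T items Y ≤ suppDisj T items X := suppDisj_mono T items h
  have h3 : suppConj T items Y * suppDisj T items X ≤ suppConj T items X * suppDisj T items X :=
    hcross' ▸ Nat.mul_le_mul_left _ h2
  have h4 : suppConj T items Y ≤ suppConj T items X := Nat.le_of_mul_le_mul_right h3 hdX
  exact le_antisymm h4 h1

lemma mem_MCR_of_mem_RMMaxF (T : Finset τ) (items : τ → Finset ι) (I : Finset ι)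
    (minsupp : ℕ) (minbond : ℚ) {X : Finset ι}
    (h : X ∈ RMMaxF T items I minsupp minbond) : X ∈ MCR T items I minsupp minbond := by
  rcases h with h | h
  · exact h.1
  · exact h.1.1

theorem stmt10 (T : Finset τ) (items : τ → Finset ι) (I : Finset ι)
    (hitems : ∀ t ∈ T, items t ⊆ I)
    (minsupp : ℕ) (minbond : ℚ)
    (hs : 1 ≤ minsupp) (hb0 : 0 < minbond) (hb1 : minbond ≤ 1)
    (X : Finset ι) (hXI : X ⊆ I) :
    X ∈ MCR T items I minsupp minbond ↔
      ∃ J ∈ RMMaxF T items I minsupp minbond, ∃ Z ∈ RMMaxF T items I minsupp minbond,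
        J ⊆ X ∧ X ⊆ Z := by
  constructor
  · rintro ⟨hXI', hXb, hXr⟩
    have hbX : 0 < bond T items X := lt_of_lt_of_le hb0 hXb
    obtain ⟨hcX, hdX⟩ := supp_pos_of_bond_pos T items hbX
    -- J: a minimal subset of X with the same bond
    set S : Finset (Finset ι) :=
      X.powerset.filter (fun Y => bond T items Y = bond T items X) with hS
    have hXS : X ∈ S := by simp [hS]
    obtain ⟨J, hJS, hJmin⟩ := S.exists_min_image Finset.card ⟨X, hXS⟩
    simp only [hS, Finset.mem_filter, Finset.mem_powerset] at hJS
    obtain ⟨hJX, hJb⟩ := hJS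
    have hJMCR : J ∈ MCR T items I minsupp minbond :=
      ⟨hJX.trans hXI, hJb ▸ hXb, (suppConj_eq_of_bond_eq T items hJX hJb hbX) ▸ hXr⟩
    have hJmem : J ∈ MMCR T items I minsupp minbond := by
      refine ⟨hJMCR, fun Y hYJ hYb => ?_⟩
      have hYS : Y ∈ S := by
        simp only [hS, Finset.mem_filter, Finset.mem_powerset]
        exact ⟨hYJ.subset.trans hJX, hYb.trans hJb⟩
      exact absurd (hJmin Y hYS) (not_le.2 (Finset.card_lt_card hYJ))
    -- Z: a maximal correlated superset of X within I
    set S' : Finset (Finset ι) :=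
      I.powerset.filter (fun Y => X ⊆ Y ∧ minbond ≤ bond T items Y) with hS'
    have hXS' : X ∈ S' := by simp [hS', hXI, hXb]
    obtain ⟨Z, hZS, hZmax⟩ := S'.exists_max_image Finset.card ⟨X, hXS'⟩
    simp only [hS', Finset.mem_filter, Finset.mem_powerset] at hZS
    obtain ⟨hZI, hXZ, hZb⟩ := hZS
    have hZr : suppConj T items Z < minsupp :=
      lt_of_le_of_lt (suppConj_anti T items hXZ) hXr
    have hnoSuper : ∀ Y : Finset ι, Z ⊂ Y → Y ⊆ I → ¬ minbond ≤ bond T items Y := by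
      intro Y hZY hYI hYb
      have hYS' : Y ∈ S' := by
        simp only [hS', Finset.mem_filter, Finset.mem_powerset]
        exact ⟨hYI, hXZ.trans hZY.subset, hYb⟩
      exact absurd (hZmax Y hYS') (not_le.2 (Finset.card_lt_card hZY))
    have hZmem : Z ∈ MFCRMax T items I minsupp minbond := by
      refine ⟨⟨⟨hZI, hZb, hZr⟩, fun Y hZY hYI hYb => hnoSuper Y hZY hYI (hYb ▸ hZb)⟩,
        ⟨hZI, hZb⟩, fun Y hZY hYI hYMC => hnoSuper Y hZY hYI hYMC.2⟩
    exact ⟨J, Or.inl hJmem, Z, Or.inr hZmem, hJX, hXZ⟩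
  · rintro ⟨J, hJ, Z, hZ, hJX, hXZ⟩
    obtain ⟨hJI, hJb, hJr⟩ := mem_MCR_of_mem_RMMaxF T items I minsupp minbond hJ
    obtain ⟨hZI, hZb, hZr⟩ := mem_MCR_of_mem_RMMaxF T items I minsupp minbond hZ
    obtain ⟨_, hdJ⟩ := supp_pos_of_bond_pos T items (lt_of_lt_of_le hb0 hJb)
    have hdX : 0 < suppDisj T items X := lt_of_lt_of_le hdJ (suppDisj_mono T items hJX)
    refine ⟨hXI, le_trans hZb (bond_anti T items hXZ hdX),
      lt_of_le_of_lt (suppConj_anti T items hJX) hJr⟩
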